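/- Suppose W ⊆ O \ {O_i, O_j} is such that every proper subset V ⊂ W d-connects O_i and O_j given V ∪ S (i.e., W is a minimal separating set). If O_i and O_j are d-separated given W ∪ S and O_k ∈ W, then O_k is an ancestor of {O_i, O_j} ∪ S. -/

import Mathlib

open List

variable {V : Type*}

/-- Ancestor relation: directed path or equality. -/
def Anc (E : V → V → Prop) : V → V → Prop := Relation.ReflTransGen E

/-- `x` is an ancestor of some member of the set `T`. -/
def AncSet (E : V → V → Prop) (T : Set V) (x : V) : Prop := ∃ y ∈ T, Anc E x y

/-- Undirected adjacency underlying a directed graph. -/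
def Adjacent (E : V → V → Prop) (x y : V) : Prop := E x y ∨ E y x

/-- An (undirected) path in the directed graph: consecutive vertices adjacent, no repeats. -/
def IsTrail (E : V → V → Prop) (l : List V) : Prop := l.Chain' (Adjacent E) ∧ l.Nodup

/-- `b` is a collider between `a` and `c`: both edges point into `b`. -/
def ColliderTriple (E : V → V → Prop) (a b c : V) : Prop := E a b ∧ E c b

/-- A path from `x` to `y` that is active (d-connecting) given the conditioning set `C`. -/
def ActivePath (E : V → V → Prop) (C : Set V) (l : List V) (x y : V) : Prop :=
  IsTrail E l ∧ l.head? = some x ∧ l.getLast? = some y ∧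
  (∀ a b c, [a, b, c] <:+: l → ColliderTriple E a b c → ∃ d ∈ C, Anc E b d) ∧
  (∀ a b c, [a, b, c] <:+: l → ¬ ColliderTriple E a b c → b ∉ C)

/-- d-connection given a conditioning set. -/
def DConn (E : V → V → Prop) (C : Set V) (x y : V) : Prop := ∃ l, ActivePath E C l x y

/-- d-separation given a conditioning set. -/
def DSep (E : V → V → Prop) (C : Set V) (x y : V) : Prop := ¬ DConn E C x y

/-- An inducing path between `x` and `y` relative to latent set `L` and selection set `S`. -/
def InducingPath (E : V → V → Prop) (L S : Set V) (l : List V) (x y : V) : Prop :=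
  IsTrail E l ∧ l.head? = some x ∧ l.getLast? = some y ∧
  (∀ a b c, [a, b, c] <:+: l → ColliderTriple E a b c → AncSet E ({x, y} ∪ S) b) ∧
  (∀ a b c, [a, b, c] <:+: l → ¬ ColliderTriple E a b c → b ∈ L)

def HasInducingPath (E : V → V → Prop) (L S : Set V) (x y : V) : Prop :=
  ∃ l, InducingPath E L S l x y

/-- The path ends with an arrowhead at its last vertex (is "into" its last vertex). -/
def IntoLast (E : V → V → Prop) (l : List V) : Prop := ∃ p a b, l = p ++ [a, b] ∧ E a b

/-- The path is into its first vertex. -/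
def IntoHead (E : V → V → Prop) (l : List V) : Prop := ∃ a b t, l = a :: b :: t ∧ E b a

/-- The path is out of its first vertex. -/
def OutHead (E : V → V → Prop) (l : List V) : Prop := ∃ a b t, l = a :: b :: t ∧ E a b

/-- The path is out of its last vertex. -/
def OutLast (E : V → V → Prop) (l : List V) : Prop := ∃ p a b, l = p ++ [a, b] ∧ E b a

/-- Membership in D-SEP(x,y). -/
def InDSEP (E : V → V → Prop) (O L S : Set V) (x y k : V) : Prop :=
  ∃ σ : List V, σ.head? = some x ∧ σ.getLast? = some k ∧ σ.Nodup ∧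
    (∀ v ∈ σ, v ∈ O ∧ AncSet E ({x, y} ∪ S) v) ∧
    σ.Chain' (HasInducingPath E L S) ∧
    (∀ a b c, [a, b, c] <:+: σ →
      (∃ l, InducingPath E L S l a b ∧ IntoLast E l) ∧
      (∃ l, InducingPath E L S l c b ∧ IntoLast E l))

/-- A mixed graph: symmetric adjacency together with arrowhead marks.
`arrow x y` means the edge between `x` and `y` has an arrowhead at `y`. -/
structure Mixed (V : Type*) where
  adj : V → V → Prop
  arrow : V → V → Prop

/-- v-structure `a *→ b ←* c` with `a, c` non-adjacent. -/
def VStruct (H : Mixed V) (a b c : V) : Prop :=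
  H.adj a b ∧ H.adj b c ∧ ¬ H.adj a c ∧ H.arrow a b ∧ H.arrow c b

def TriangleIn (H : Mixed V) (a b c : V) : Prop := H.adj a b ∧ H.adj b c ∧ H.adj a c

/-- Membership in PD-SEP(x) of a mixed graph. -/
def InPDSEP (H : Mixed V) (x k : V) : Prop :=
  ∃ pa : List V, pa.head? = some x ∧ pa.getLast? = some k ∧ pa.Nodup ∧ pa.Chain' H.adj ∧
    ∀ a b c, [a, b, c] <:+: pa → VStruct H a b c ∨ TriangleIn H a b c

/-- The MAAG of a directed graph with latent set `L` and selection set `S`: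
adjacency iff an inducing path exists, arrowhead at `y` iff `y ∉ Anc({x} ∪ S)`. -/
def MAAG (E : V → V → Prop) (L S : Set V) : Mixed V where
  adj := fun x y => x ≠ y ∧ HasInducingPath E L S x y
  arrow := fun x y => (x ≠ y ∧ HasInducingPath E L S x y) ∧ ¬ AncSet E (insert x S) y

/-- Undirected (tail-tail) edge of the MAAG. -/
def UndirMAAG (E : V → V → Prop) (L S : Set V) (a b : V) : Prop :=
  (a ≠ b ∧ HasInducingPath E L S a b) ∧ AncSet E (insert b S) a ∧ AncSet E (insert a S) b

/-- Every edge of the path incident to `v` is into `v`. -/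
def EdgesIntoAt (E : V → V → Prop) (l : List V) (v : V) : Prop :=
  ∀ a b, [a, b] <:+: l → (a = v → E b v) ∧ (b = v → E a v)

/-- Every edge of the path incident to `v` is out of `v`. -/
def EdgesOutAt (E : V → V → Prop) (l : List V) (v : V) : Prop :=
  ∀ a b, [a, b] <:+: l → (a = v → E v b) ∧ (b = v → E v a)

lemma ancSet_mono {E : V → V → Prop} {T T' : Set V} (h : T ⊆ T') {x : V}
    (hx : AncSet E T x) : AncSet E T' x := by
  obtain ⟨y, hy, hxy⟩ := hx
  exact ⟨y, h hy, hxy⟩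

lemma reach_last (E : V → V → Prop) (C : Set V) (y : V) :
    ∀ (q p : List V) (u v : V),
      ((p ++ u :: v :: q).Chain' (Adjacent E)) →
      (∀ a b c, [a, b, c] <:+: p ++ u :: v :: q → ColliderTriple E a b c →
        ∃ d ∈ C, Anc E b d) →
      ((p ++ u :: v :: q).getLast? = some y) → E u v → AncSet E ({y} ∪ C) v := by
  intro q
  induction q with
  | nil =>
    intro p u v _ _ hlast _
    have : ((p ++ [u]) ++ [v]).getLast? = some y := by simpa using hlast
    rw [List.getLast?_concat] at this
    obtain rfl : v = y := by injection this
    exact ⟨v, Or.inl rfl, Relation.ReflTransGen.refl⟩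
  | cons w q' ih =>
    intro p u v hch hcol hlast huv
    by_cases hcvw : ColliderTriple E u v w
    · obtain ⟨d, hd, hanc⟩ := hcol u v w ⟨p, q', by simp⟩ hcvw
      exact ⟨d, Or.inr hd, hanc⟩
    · have hwv : ¬ E w v := fun h => hcvw ⟨huv, h⟩
      have hadj : Adjacent E v w := by
        have hinf : [v, w] <:+: p ++ u :: v :: w :: q' := ⟨p ++ [u], q', by simp⟩
        have := hch.infix hinf
        exact (List.isChain_pair.mp this)
      have hvw : E v w := hadj.resolve_right hwv
      have heq : (p ++ [u]) ++ v :: w :: q' = p ++ u :: v :: w :: q' := by simp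
      have h2 := ih (p ++ [u]) v w (by rw [heq]; exact hch)
        (by rw [heq]; exact hcol) (by rw [heq]; exact hlast) hvw
      obtain ⟨z, hz, hanc⟩ := h2
      exact ⟨z, hz, Relation.ReflTransGen.head hvw hanc⟩

lemma mem_active_anc {E : V → V → Prop} {C : Set V} {l : List V} {x y v : V}
    (h : ActivePath E C l x y) (hv : v ∈ l) : AncSet E ({x, y} ∪ C) v := by
  obtain ⟨⟨hch, _⟩, hhead, hlast, hcol, _⟩ := h
  obtain ⟨p, q, rfl⟩ := List.append_of_mem hv
  have hsubxy : ({y} : Set V) ∪ C ⊆ {x, y} ∪ C := by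
    intro z hz; rcases hz with hz | hz
    · exact Or.inl (Or.inr hz)
    · exact Or.inr hz
  have hsubx : ({x} : Set V) ∪ C ⊆ {x, y} ∪ C := by
    intro z hz; rcases hz with hz | hz
    · exact Or.inl (Or.inl hz)
    · exact Or.inr hz
  rcases q with _ | ⟨w, q'⟩
  · have : ((p ++ [v])).getLast? = some y := hlast
    rw [List.getLast?_concat] at this
    obtain rfl : v = y := by injection this
    exact ⟨v, Or.inl (Or.inr rfl), Relation.ReflTransGen.refl⟩
  · -- v has a neighbour w after it
    have hadjvw : Adjacent E v w := by
      have hinf : [v, w] <:+: p ++ v :: w :: q' := ⟨p, q', by simp⟩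
      exact List.isChain_pair.mp (hch.infix hinf)
    by_cases hvw : E v w
    · -- go towards the end
      have := reach_last E C y q' p v w hch hcol hlast hvw
      obtain ⟨z, hz, hanc⟩ := this
      exact ⟨z, hsubxy hz, Relation.ReflTransGen.head hvw hanc⟩
    · have hwv : E w v := hadjvw.resolve_left hvw
      rcases List.eq_nil_or_concat p with rfl | ⟨p'', u, rfl⟩
      · obtain rfl : v = x := by
          have : (v :: w :: q').head? = some x := hhead
          injection this
        exact ⟨v, Or.inl (Or.inl rfl), Relation.ReflTransGen.refl⟩
      · simp only [List.concat_eq_append] at hch hcol hhead hlast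
        by_cases hcuv : ColliderTriple E u v w
        · obtain ⟨d, hd, hanc⟩ := hcol u v w ⟨p'', q', by simp⟩ hcuv
          exact ⟨d, Or.inr hd, hanc⟩
        · have huvn : ¬ E u v := fun h => hcuv ⟨h, hwv⟩
          have hadjuv : Adjacent E u v := by
            have hinf : [u, v] <:+: (p'' ++ [u]) ++ v :: w :: q' := ⟨p'', w :: q', by simp⟩
            exact List.isChain_pair.mp (hch.infix hinf)
          have hvu : E v u := hadjuv.resolve_left huvn
          -- work on the reversed list
          set l := (p'' ++ [u]) ++ v :: w :: q' with hl
          have hchr : l.reverse.Chain' (Adjacent E) := by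
            refine List.isChain_reverse.mpr ?_
            exact hch.imp fun a b h => h.symm
          have hcolr : ∀ a b c, [a, b, c] <:+: l.reverse → ColliderTriple E a b c →
              ∃ d ∈ C, Anc E b d := by
            intro a b c hin hcabc
            have hin' : [c, b, a] <:+: l := by
              have : [c, b, a].reverse <:+: l.reverse := by simpa using hin
              exact List.reverse_infix.mp this
            exact hcol c b a hin' ⟨hcabc.2, hcabc.1⟩
          have hlastr : l.reverse.getLast? = some x := by
            rw [List.getLast?_reverse]; exact hhead
          have heq : (w :: q').reverse ++ v :: u :: p''.reverse = l.reverse := by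
            rw [hl]; simp
          have := reach_last E C x p''.reverse ((w :: q').reverse) v u
            (by rw [heq]; exact hchr) (by rw [heq]; exact hcolr)
            (by rw [heq]; exact hlastr) hvu
          obtain ⟨z, hz, hanc⟩ := this
          exact ⟨z, hsubx hz, Relation.ReflTransGen.head hvu hanc⟩

/-- if `W` is a minimal separating set of `i` and `j` (every proper subset
d-connects them given the subset together with `S`) and `W ∪ S` d-separates them, then
every `k ∈ W` is an ancestor of `{i, j} ∪ S`. -/
theorem stmt7 (E : V → V → Prop) (O L S : Set V)
    (hOL : Disjoint O L) (hOS : Disjoint O S) (hLS : Disjoint L S)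
    (hcover : ∀ v : V, v ∈ O ∨ v ∈ L ∨ v ∈ S)
    (i j k : V) (W : Set V) (hW : W ⊆ O \ {i, j})
    (hmin : ∀ V' : Set V, V' ⊂ W → DConn E (V' ∪ S) i j)
    (hsep : DSep E (W ∪ S) i j) (hk : k ∈ W) :
    AncSet E ({i, j} ∪ S) k := by
  by_contra hk'
  classical
  set A : Set V := {w | w ∈ W ∧ ¬ AncSet E ({i, j} ∪ S) w} with hA
  have hkA : k ∈ A := ⟨hk, hk'⟩
  have hssub : W \ A ⊂ W := by
    constructor
    · exact Set.diff_subset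
    · intro hsup
      exact ((hsup hk).2) hkA
  obtain ⟨l, hact⟩ := hmin (W \ A) hssub
  obtain ⟨htrail, hhead, hlast, hcolC, hnonC⟩ := hact
  have hna : ¬ ActivePath E (W ∪ S) l i j := fun h => hsep ⟨l, h⟩
  have hbad : ∃ a b c, ([a, b, c] <:+: l) ∧ ¬ ColliderTriple E a b c ∧ b ∈ W ∪ S := by
    by_contra hno
    push_neg at hno
    refine hna ⟨htrail, hhead, hlast, ?_, ?_⟩
    · intro a b c hin hc
      obtain ⟨d, hd, hanc⟩ := hcolC a b c hin hc
      refine ⟨d, ?_, hanc⟩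
      rcases hd with hd | hd
      · exact Or.inl hd.1
      · exact Or.inr hd
    · exact hno
  obtain ⟨a, b, c, hin, hnc, hbWS⟩ := hbad
  have hbnot : b ∉ (W \ A) ∪ S := hnonC a b c hin hnc
  have hbA : b ∈ A := by
    rcases hbWS with hbW | hbS
    · by_contra h
      exact hbnot (Or.inl ⟨hbW, h⟩)
    · exact absurd (Or.inr hbS) hbnot
  have hbl : b ∈ l := hin.subset (by simp)
  have hanc : AncSet E ({i, j} ∪ ((W \ A) ∪ S)) b :=
    mem_active_anc ⟨htrail, hhead, hlast, hcolC, hnonC⟩ hbl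
  obtain ⟨z, hz, hzanc⟩ := hanc
  rcases hz with hz | hz
  · exact hbA.2 ⟨z, Or.inl hz, hzanc⟩
  · rcases hz with ⟨hzW, hzA⟩ | hzS
    · have hzanc' : AncSet E ({i, j} ∪ S) z := by
        by_contra h
        exact hzA ⟨hzW, h⟩
      obtain ⟨z', hz', h'⟩ := hzanc'
      exact hbA.2 ⟨z', hz', hzanc.trans h'⟩
    · exact hbA.2 ⟨z, Or.inr hzS, hzanc⟩
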